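/- Concentration of the information density for a DMC: Consider a discrete memoryless channel with finite input alphabet 𝖷, finite output alphabet 𝖸, and strictly positive transition probabilities T(y|x) > 0. Fix an arbitrary input distribution P_{Xⁿ} on 𝖷ⁿ and let P_{Yⁿ} be the induced output distribution. Then for every fixed input block xⁿ ∈ 𝖷ⁿ and every t > 0, P_{Yⁿ|Xⁿ=xⁿ}[ log(P_{Yⁿ|Xⁿ=xⁿ}(Yⁿ)/P_{Yⁿ}(Yⁿ)) ≥ D(P_{Yⁿ|Xⁿ=xⁿ} ‖ P_{Yⁿ}) + t ] ≤ exp(−2t²/(n·c(T)²)), where c(T) = 2·max_{x,x'∈𝖷} max_{y∈𝖸} log(T(y|x)/T(y|x')). -/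

import Mathlib

open Finset Real


lemma key_ineq (p h : ℝ) (hp0 : 0 ≤ p) (hp1 : p ≤ 1) :
    Real.log (1 - p + p * Real.exp h) ≤ h * p + h ^ 2 / 8 := by
  set g : ℝ → ℝ := fun x => 1 - p + p * Real.exp x with hg_def
  have hg : ∀ x, 0 < g x := by
    intro x
    have := Real.exp_pos x
    rcases eq_or_lt_of_le hp0 with h0 | h0
    · simp [hg_def, ← h0]
    · have : 0 < p * Real.exp x := mul_pos h0 (Real.exp_pos x)
      simp only [hg_def]; linarith
  set u : ℝ → ℝ := fun x => p * Real.exp x / g x with hu_def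
  set F : ℝ → ℝ := fun x => x * p + x ^ 2 / 8 - Real.log (g x) with hF_def
  set F' : ℝ → ℝ := fun x => p + x / 4 - u x with hF'_def
  have hgd : ∀ x, HasDerivAt g (p * Real.exp x) x := by
    intro x
    simpa [hg_def] using ((Real.hasDerivAt_exp x).const_mul p).const_add (1 - p)
  have hF : ∀ x, HasDerivAt F (F' x) x := by
    intro x
    have h1 : HasDerivAt (fun x : ℝ => x * p) p x := by
      simpa using (hasDerivAt_id x).mul_const p
    have h2 : HasDerivAt (fun x : ℝ => x ^ 2 / 8) (x / 4) x := by
      have := (hasDerivAt_pow 2 x).div_const 8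
      exact this.congr_deriv (by norm_num; ring)
    have h3 : HasDerivAt (fun x => Real.log (g x)) (u x) x := by
      have := (hgd x).log (hg x).ne'
      simpa [hu_def] using this
    exact (h1.add h2).sub h3
  have hF'd : ∀ x, HasDerivAt F' (1 / 4 - (u x - u x ^ 2)) x := by
    intro x
    have h1 : HasDerivAt (fun x : ℝ => p + x / 4) (1 / 4) x := by
      simpa using ((hasDerivAt_id x).div_const 4).const_add p
    have h2 : HasDerivAt u (u x - u x ^ 2) x := by
      have hnum : HasDerivAt (fun x => p * Real.exp x) (p * Real.exp x) x :=
        (Real.hasDerivAt_exp x).const_mul p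
      have hdiv := hnum.div (hgd x) (hg x).ne'
      have heq : (p * Real.exp x * g x - p * Real.exp x * (p * Real.exp x)) / g x ^ 2
          = u x - u x ^ 2 := by
        have hgx := (hg x).ne'
        simp only [hu_def]
        field_simp
      rw [heq] at hdiv
      exact hdiv
    exact h1.sub h2
  have hF'' : ∀ x, 0 ≤ 1 / 4 - (u x - u x ^ 2) := by
    intro x; nlinarith [sq_nonneg (u x - 1 / 2)]
  have hF'mono : Monotone F' := by
    apply monotone_of_deriv_nonneg
    · exact fun x => (hF'd x).differentiableAt
    · intro x; rw [(hF'd x).deriv]; exact hF'' x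
  have hF'0 : F' 0 = 0 := by
    simp [hF'_def, hu_def, hg_def]
  have hF0 : F 0 = 0 := by
    simp [hF_def, hg_def]
  have hFdiff : Differentiable ℝ F := fun x => (hF x).differentiableAt
  have key : 0 ≤ F h := by
    rcases le_total 0 h with hh | hh
    · have hmono : MonotoneOn F (Set.Ici 0) := by
        apply monotoneOn_of_deriv_nonneg (convex_Ici 0)
        · exact hFdiff.continuous.continuousOn
        · exact fun x _ => (hF x).differentiableAt.differentiableWithinAt
        · intro x hx
          rw [(hF x).deriv]
          have : (0:ℝ) ≤ x := le_of_lt (by simpa using hx)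
          have := hF'mono this
          rw [hF'0] at this; exact this
      have := hmono (Set.self_mem_Ici) (Set.mem_Ici.mpr hh) hh
      rw [hF0] at this; exact this
    · have hanti : AntitoneOn F (Set.Iic 0) := by
        apply antitoneOn_of_deriv_nonpos (convex_Iic 0)
        · exact hFdiff.continuous.continuousOn
        · exact fun x _ => (hF x).differentiableAt.differentiableWithinAt
        · intro x hx
          rw [(hF x).deriv]
          have : x ≤ (0:ℝ) := le_of_lt (by simpa using hx)
          have := hF'mono this
          rw [hF'0] at this; exact this
      have := hanti (Set.mem_Iic.mpr hh) (Set.self_mem_Iic) hh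
      rw [hF0] at this; exact this
  have key2 : 0 ≤ h * p + h ^ 2 / 8 - Real.log (1 - p + p * Real.exp h) := key
  linarith


lemma hoeffding_fin {Y : Type*} [Fintype Y] [Nonempty Y]
    (q : Y → ℝ) (hq : ∀ y, 0 ≤ q y) (hq1 : ∑ y, q y = 1)
    (g : Y → ℝ) (c l : ℝ) (hl : 0 ≤ l)
    (hosc : ∀ y y', g y - g y' ≤ c)
    (hmean : ∑ y, q y * g y = 0) :
    ∑ y, q y * Real.exp (l * g y) ≤ Real.exp (l ^ 2 * c ^ 2 / 8) := by
  have hc0 : 0 ≤ c := by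
    have := hosc (Classical.arbitrary Y) (Classical.arbitrary Y); linarith
  set a := Finset.univ.inf' Finset.univ_nonempty g with ha_def
  set b := Finset.univ.sup' Finset.univ_nonempty g with hb_def
  have ha : ∀ y, a ≤ g y := fun y => Finset.inf'_le _ (Finset.mem_univ y)
  have hb : ∀ y, g y ≤ b := fun y => Finset.le_sup' _ (Finset.mem_univ y)
  have hba_c : b - a ≤ c := by
    obtain ⟨y1, _, hy1⟩ := Finset.exists_mem_eq_sup' Finset.univ_nonempty g
    obtain ⟨y2, _, hy2⟩ := Finset.exists_mem_eq_inf' Finset.univ_nonempty g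
    rw [← ha_def] at hy2; rw [← hb_def] at hy1
    rw [hy1, hy2]; exact hosc y1 y2
  have ha0 : a ≤ 0 := by
    have h1 : ∑ y, q y * a ≤ ∑ y, q y * g y :=
      Finset.sum_le_sum fun y _ => mul_le_mul_of_nonneg_left (ha y) (hq y)
    rw [hmean, ← Finset.sum_mul, hq1, one_mul] at h1; exact h1
  have hb0 : 0 ≤ b := by
    have h1 : ∑ y, q y * g y ≤ ∑ y, q y * b :=
      Finset.sum_le_sum fun y _ => mul_le_mul_of_nonneg_left (hb y) (hq y)
    rw [hmean, ← Finset.sum_mul, hq1, one_mul] at h1; exact h1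
  rcases eq_or_lt_of_le (sub_nonneg.mpr (le_trans (ha (Classical.arbitrary Y)) (hb _))) with hab | hab
  · -- b - a = 0 : g is constant = 0
    have hba : b = a := by linarith
    have hga : ∀ y, g y = a := fun y => le_antisymm (hba ▸ hb y) (ha y)
    have ha0' : a = 0 := by
      have : ∑ y, q y * g y = ∑ y, q y * a :=
        Finset.sum_congr rfl fun y _ => by rw [hga y]
      rw [hmean, ← Finset.sum_mul, hq1, one_mul] at this
      exact this.symm
    have hgz : ∀ y, g y = 0 := fun y => by rw [hga y, ha0']
    simp only [hgz, mul_zero, Real.exp_zero, mul_one]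
    rw [hq1]
    exact Real.one_le_exp (by positivity)
  · -- b - a > 0
    set p := -a / (b - a) with hp_def
    have hp0 : 0 ≤ p := div_nonneg (by linarith) (by linarith)
    have hp1 : p ≤ 1 := by
      rw [div_le_one (by linarith)]; linarith
    set h := l * (b - a) with hh_def
    -- pointwise convexity bound
    have hpt : ∀ y, Real.exp (l * g y) ≤
        ((b - g y) / (b - a)) * Real.exp (l * a) + ((g y - a) / (b - a)) * Real.exp (l * b) := by
      intro y
      have hw1 : (0:ℝ) ≤ (b - g y) / (b - a) := div_nonneg (by linarith [hb y]) (by linarith)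
      have hw2 : (0:ℝ) ≤ (g y - a) / (b - a) := div_nonneg (by linarith [ha y]) (by linarith)
      have hws : (b - g y) / (b - a) + (g y - a) / (b - a) = 1 := by
        field_simp
        ring
      have hcv := convexOn_exp.2 (Set.mem_univ (l * a)) (Set.mem_univ (l * b)) hw1 hw2 hws
      simp only [smul_eq_mul] at hcv
      have harg : (b - g y) / (b - a) * (l * a) + (g y - a) / (b - a) * (l * b) = l * g y := by
        field_simp
        ring
      rw [harg] at hcv
      exact hcv
    calc ∑ y, q y * Real.exp (l * g y)
        ≤ ∑ y, q y * (((b - g y) / (b - a)) * Real.exp (l * a)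
            + ((g y - a) / (b - a)) * Real.exp (l * b)) :=
          Finset.sum_le_sum fun y _ => mul_le_mul_of_nonneg_left (hpt y) (hq y)
      _ = (b / (b - a)) * Real.exp (l * a) + (-a / (b - a)) * Real.exp (l * b) := by
          rw [Finset.sum_congr rfl (fun y _ => by ring :
            ∀ y ∈ Finset.univ, q y * (((b - g y) / (b - a)) * Real.exp (l * a)
              + ((g y - a) / (b - a)) * Real.exp (l * b))
            = (q y * b - q y * g y) * (Real.exp (l * a) / (b - a))
              + (q y * g y - q y * a) * (Real.exp (l * b) / (b - a)))]
          rw [Finset.sum_add_distrib, ← Finset.sum_mul, ← Finset.sum_mul,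
            Finset.sum_sub_distrib, Finset.sum_sub_distrib, hmean,
            ← Finset.sum_mul, ← Finset.sum_mul, hq1]
          ring
      _ = Real.exp (l * a) * (1 - p + p * Real.exp h) := by
          have hne : b - a ≠ 0 := ne_of_gt hab
          have he : Real.exp (l * a) * Real.exp (l * (b - a)) = Real.exp (l * b) := by
            rw [← Real.exp_add]; congr 1; ring
          rw [hp_def, hh_def, ← he]
          field_simp
          ring
      _ ≤ Real.exp (l ^ 2 * c ^ 2 / 8) := by
          have hne : b - a ≠ 0 := ne_of_gt hab
          have hpos : 0 < 1 - p + p * Real.exp h := by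
            rcases eq_or_lt_of_le hp0 with h0 | h0
            · rw [← h0]; norm_num
            · have := mul_pos h0 (Real.exp_pos h); linarith
          have hkey := key_ineq p h hp0 hp1
          have h2 : 1 - p + p * Real.exp h ≤ Real.exp (h * p + h ^ 2 / 8) := by
            rw [← Real.exp_log hpos]
            exact Real.exp_le_exp.mpr hkey
          have h3 : Real.exp (l * a) * (1 - p + p * Real.exp h)
              ≤ Real.exp (l * a) * Real.exp (h * p + h ^ 2 / 8) :=
            mul_le_mul_of_nonneg_left h2 (Real.exp_pos _).le
          rw [← Real.exp_add] at h3
          refine h3.trans (Real.exp_le_exp.mpr ?_)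
          have hap : l * a + h * p = 0 := by
            rw [hh_def, hp_def]; field_simp; ring
          have hh2 : h ^ 2 ≤ l ^ 2 * c ^ 2 := by
            rw [hh_def]
            have h1 : (b - a) ^ 2 ≤ c ^ 2 := by nlinarith
            nlinarith [sq_nonneg l]
          linarith


lemma mgf_bound {Y : Type*} [Fintype Y] [Nonempty Y] :
    ∀ (n : ℕ) (q : Fin n → Y → ℝ), (∀ i y, 0 ≤ q i y) → (∀ i, ∑ y, q i y = 1) →
    ∀ (f : (Fin n → Y) → ℝ) (c l : ℝ), 0 ≤ l →
    (∀ (i : Fin n) (yn : Fin n → Y) (y' : Y), f yn - f (Function.update yn i y') ≤ c) →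
    ∑ yn : Fin n → Y, (∏ i, q i (yn i)) *
        Real.exp (l * (f yn - ∑ zn : Fin n → Y, (∏ i, q i (zn i)) * f zn))
      ≤ Real.exp (n * (l ^ 2 * c ^ 2 / 8)) := by
  intro n
  induction n with
  | zero =>
    intro q hq hq1 f c l hl hbd
    simp
  | succ n ih =>
    intro q hq hq1 f c l hl hbd
    set q' : Fin n → Y → ℝ := fun i => q i.succ with hq'_def
    set fbar : (Fin n → Y) → ℝ := fun z => ∑ y, q 0 y * f ((Fin.cons y z : Fin (n+1) → Y)) with hfbar_def
    set μ : ℝ := ∑ zn : Fin (n+1) → Y, (∏ i, q i (zn i)) * f zn with hμ_def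
    -- sum over Fin (n+1) → Y splits into head and tail
    have hsplit : ∀ (F : (Fin (n+1) → Y) → ℝ),
        ∑ yn : Fin (n+1) → Y, F yn = ∑ y : Y, ∑ z : Fin n → Y, F ((Fin.cons y z : Fin (n+1) → Y)) := by
      intro F
      rw [← (Fin.consEquiv (fun _ => Y)).sum_comp F]
      rw [Fintype.sum_prod_type]
      rfl
    have hprodcons : ∀ (y : Y) (z : Fin n → Y),
        (∏ i : Fin (n+1), q i ((Fin.cons y z : Fin (n+1) → Y) i)) = q 0 y * ∏ i : Fin n, q' i (z i) := by
      intro y z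
      rw [Fin.prod_univ_succ]
      simp [hq'_def]
    -- μ as mean of fbar
    have hμ' : μ = ∑ z : Fin n → Y, (∏ i, q' i (z i)) * fbar z := by
      rw [hμ_def, hsplit]
      rw [Finset.sum_comm]
      apply Finset.sum_congr rfl
      intro z _
      rw [hfbar_def]
      simp only []
      rw [Finset.mul_sum]
      apply Finset.sum_congr rfl
      intro y _
      rw [hprodcons]
      ring
    -- fbar has bounded differences
    have hbd' : ∀ (i : Fin n) (z : Fin n → Y) (y' : Y),
        fbar z - fbar (Function.update z i y') ≤ c := by
      intro i z y'
      have : fbar z - fbar (Function.update z i y')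
          = ∑ y, q 0 y * (f ((Fin.cons y z : Fin (n+1) → Y)) - f ((Fin.cons y (Function.update z i y') : Fin (n+1) → Y))) := by
        rw [hfbar_def]; simp only []
        rw [← Finset.sum_sub_distrib]
        apply Finset.sum_congr rfl; intro y _; ring
      rw [this]
      calc ∑ y, q 0 y * (f ((Fin.cons y z : Fin (n+1) → Y)) - f ((Fin.cons y (Function.update z i y') : Fin (n+1) → Y)))
          ≤ ∑ y, q 0 y * c := by
            apply Finset.sum_le_sum
            intro y _
            apply mul_le_mul_of_nonneg_left _ (hq 0 y)
            rw [Fin.cons_update]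
            exact hbd i.succ ((Fin.cons y z : Fin (n+1) → Y)) y'
        _ = c := by rw [← Finset.sum_mul, hq1, one_mul]
    -- main computation
    calc ∑ yn : Fin (n+1) → Y, (∏ i, q i (yn i)) * Real.exp (l * (f yn - μ))
        = ∑ z : Fin n → Y, (∏ i, q' i (z i)) * Real.exp (l * (fbar z - μ)) *
            (∑ y, q 0 y * Real.exp (l * (f ((Fin.cons y z : Fin (n+1) → Y)) - fbar z))) := by
          rw [hsplit, Finset.sum_comm]
          apply Finset.sum_congr rfl
          intro z _
          rw [Finset.mul_sum]
          apply Finset.sum_congr rfl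
          intro y _
          rw [hprodcons]
          have he : Real.exp (l * (fbar z - μ)) *
              Real.exp (l * (f ((Fin.cons y z : Fin (n+1) → Y)) - fbar z))
              = Real.exp (l * (f ((Fin.cons y z : Fin (n+1) → Y)) - μ)) := by
            rw [← Real.exp_add]; congr 1; ring
          rw [← he]; ring
      _ ≤ ∑ z : Fin n → Y, (∏ i, q' i (z i)) * Real.exp (l * (fbar z - μ)) *
            Real.exp (l ^ 2 * c ^ 2 / 8) := by
          apply Finset.sum_le_sum
          intro z _
          apply mul_le_mul_of_nonneg_left
          · apply hoeffding_fin (q 0) (hq 0) (hq1 0) _ c l hl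
            · intro y y'
              have h1 : f ((Fin.cons y z : Fin (n+1) → Y)) - f ((Fin.cons y' z : Fin (n+1) → Y)) ≤ c := by
                have := hbd 0 ((Fin.cons y z : Fin (n+1) → Y)) y'
                rwa [Fin.update_cons_zero] at this
              linarith
            · calc ∑ y, q 0 y * (f ((Fin.cons y z : Fin (n+1) → Y)) - fbar z)
                  = ∑ y, (q 0 y * f ((Fin.cons y z : Fin (n+1) → Y)) - q 0 y * fbar z) :=
                    Finset.sum_congr rfl fun y _ => by ring
                _ = 0 := by
                    rw [Finset.sum_sub_distrib, ← Finset.sum_mul, hq1 0, one_mul]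
                    simp [hfbar_def]
          · exact mul_nonneg (Finset.prod_nonneg fun i _ => hq i.succ (z i))
              (Real.exp_pos _).le
      _ ≤ Real.exp ((n+1 : ℕ) * (l ^ 2 * c ^ 2 / 8)) := by
          rw [← Finset.sum_mul]
          have hih := ih q' (fun i y => hq i.succ y) (fun i => hq1 i.succ) fbar c l hl hbd'
          rw [← hμ'] at hih
          calc (∑ z : Fin n → Y, (∏ i, q' i (z i)) * Real.exp (l * (fbar z - μ))) *
                Real.exp (l ^ 2 * c ^ 2 / 8)
              ≤ Real.exp (n * (l ^ 2 * c ^ 2 / 8)) * Real.exp (l ^ 2 * c ^ 2 / 8) :=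
                mul_le_mul_of_nonneg_right hih (Real.exp_pos _).le
            _ = Real.exp ((n+1 : ℕ) * (l ^ 2 * c ^ 2 / 8)) := by
                rw [← Real.exp_add]; congr 1; push_cast; ring


lemma mcdiarmid_fin {Y : Type*} [Fintype Y] [Nonempty Y]
    (n : ℕ) (hn : 0 < n) (q : Fin n → Y → ℝ)
    (hq : ∀ i y, 0 ≤ q i y) (hq1 : ∀ i, ∑ y, q i y = 1)
    (f : (Fin n → Y) → ℝ) (c : ℝ) (hc : 0 < c)
    (hbd : ∀ (i : Fin n) (yn : Fin n → Y) (y' : Y), f yn - f (Function.update yn i y') ≤ c)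
    (t : ℝ) (ht : 0 < t) :
    ∑ yn ∈ Finset.univ.filter
        (fun yn : Fin n → Y =>
          (∑ zn : Fin n → Y, (∏ i, q i (zn i)) * f zn) + t ≤ f yn),
        ∏ i, q i (yn i)
      ≤ Real.exp (-2 * t ^ 2 / (n * c ^ 2)) := by
  set μ : ℝ := ∑ zn : Fin n → Y, (∏ i, q i (zn i)) * f zn with hμ_def
  set l : ℝ := 4 * t / (n * c ^ 2) with hl_def
  have hnc : (0:ℝ) < n * c ^ 2 := by
    have : (0:ℝ) < n := Nat.cast_pos.mpr hn
    positivity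
  have hl : 0 < l := by positivity
  have hQnn : ∀ yn : Fin n → Y, 0 ≤ ∏ i, q i (yn i) :=
    fun yn => Finset.prod_nonneg fun i _ => hq i (yn i)
  calc ∑ yn ∈ Finset.univ.filter (fun yn : Fin n → Y => μ + t ≤ f yn), ∏ i, q i (yn i)
      ≤ ∑ yn ∈ Finset.univ.filter (fun yn : Fin n → Y => μ + t ≤ f yn),
          (∏ i, q i (yn i)) * (Real.exp (-(l * t)) * Real.exp (l * (f yn - μ))) := by
        apply Finset.sum_le_sum
        intro yn hyn
        rw [Finset.mem_filter] at hyn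
        have h1 : (1:ℝ) ≤ Real.exp (-(l * t)) * Real.exp (l * (f yn - μ)) := by
          rw [← Real.exp_add, ← Real.exp_zero]
          apply Real.exp_le_exp.mpr
          have : μ + t ≤ f yn := hyn.2
          nlinarith
        nlinarith [hQnn yn, h1]
    _ ≤ ∑ yn : Fin n → Y,
          (∏ i, q i (yn i)) * (Real.exp (-(l * t)) * Real.exp (l * (f yn - μ))) := by
        apply Finset.sum_le_sum_of_subset_of_nonneg (Finset.filter_subset _ _)
        intro yn _ _
        exact mul_nonneg (hQnn yn) (by positivity)
    _ = Real.exp (-(l * t)) * ∑ yn : Fin n → Y,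
          (∏ i, q i (yn i)) * Real.exp (l * (f yn - μ)) := by
        rw [Finset.mul_sum]
        apply Finset.sum_congr rfl
        intro yn _; ring
    _ ≤ Real.exp (-(l * t)) * Real.exp (n * (l ^ 2 * c ^ 2 / 8)) := by
        apply mul_le_mul_of_nonneg_left _ (Real.exp_pos _).le
        exact mgf_bound n q hq hq1 f c l hl.le hbd
    _ = Real.exp (-2 * t ^ 2 / (n * c ^ 2)) := by
        rw [← Real.exp_add]
        congr 1
        rw [hl_def]
        field_simp
        ring


lemma info_density_bdd_diff {X Y : Type*} [Fintype X] [Fintype Y]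
    (T : X → Y → ℝ) (hTpos : ∀ x y, 0 < T x y)
    {n : ℕ} (p : (Fin n → X) → ℝ) (hp : ∀ w, 0 ≤ p w) (hpsum : ∑ w : Fin n → X, p w = 1)
    (xn : Fin n → X) (cT : ℝ)
    (hhalf : ∀ x x' y, T x y ≤ Real.exp (cT / 2) * T x' y)
    (i : Fin n) (yn : Fin n → Y) (y' : Y) :
    Real.log ((∏ j, T (xn j) (yn j)) / ∑ w : Fin n → X, p w * ∏ j, T (w j) (yn j))
      - Real.log ((∏ j, T (xn j) (Function.update yn i y' j))
          / ∑ w : Fin n → X, p w * ∏ j, T (w j) (Function.update yn i y' j)) ≤ cT := by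
  set yn' := Function.update yn i y' with hyn'_def
  set Pc : (Fin n → Y) → ℝ := fun z => ∏ j, T (xn j) (z j) with hPc_def
  set PYf : (Fin n → Y) → ℝ := fun z => ∑ w : Fin n → X, p w * ∏ j, T (w j) (z j) with hPY_def
  have hPcpos : ∀ z, 0 < Pc z := fun z => Finset.prod_pos fun j _ => hTpos _ _
  obtain ⟨w0, -, hw0⟩ := Finset.exists_ne_zero_of_sum_ne_zero
    (by rw [hpsum]; exact one_ne_zero : ∑ w : Fin n → X, p w ≠ 0)
  have hw0pos : 0 < p w0 := lt_of_le_of_ne (hp w0) (Ne.symm hw0)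
  have hPYpos : ∀ z, 0 < PYf z := by
    intro z
    have hterm : 0 < p w0 * ∏ j, T (w0 j) (z j) :=
      mul_pos hw0pos (Finset.prod_pos fun j _ => hTpos _ _)
    refine lt_of_lt_of_le hterm ?_
    exact Finset.single_le_sum (f := fun w : Fin n → X => p w * ∏ j, T (w j) (z j))
      (fun w _ => mul_nonneg (hp w) (Finset.prod_nonneg fun j _ => (hTpos _ _).le))
      (Finset.mem_univ w0)
  -- termwise inequality
  have hterm : ∀ w : Fin n → X,
      Pc yn * ∏ j, T (w j) (yn' j) ≤ Real.exp cT * (Pc yn' * ∏ j, T (w j) (yn j)) := by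
    intro w
    have hsplit : ∀ (v : X → Y → ℝ) (z : Fin n → Y) (g : Fin n → X),
        (∏ j, T (g j) (z j)) = T (g i) (z i) * ∏ j ∈ Finset.univ.erase i, T (g j) (z j) :=
      fun v z g => (Finset.mul_prod_erase Finset.univ _ (Finset.mem_univ i)).symm
    have herase : ∀ g : Fin n → X,
        (∏ j ∈ Finset.univ.erase i, T (g j) (yn' j))
          = ∏ j ∈ Finset.univ.erase i, T (g j) (yn j) := by
      intro g
      apply Finset.prod_congr rfl
      intro j hj
      rw [hyn'_def, Function.update_of_ne (Finset.ne_of_mem_erase hj)]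
    have hyni : yn' i = y' := Function.update_self i y' yn
    set A := ∏ j ∈ Finset.univ.erase i, T (xn j) (yn j) with hA_def
    set B := ∏ j ∈ Finset.univ.erase i, T (w j) (yn j) with hB_def
    have hA : 0 ≤ A := Finset.prod_nonneg fun j _ => (hTpos _ _).le
    have hB : 0 ≤ B := Finset.prod_nonneg fun j _ => (hTpos _ _).le
    have e1 : Pc yn = T (xn i) (yn i) * A := hsplit T yn xn
    have e2 : Pc yn' = T (xn i) y' * A := by
      rw [hPc_def]; simp only []
      rw [hsplit T yn' xn, herase xn, hyni]
    have e3 : (∏ j, T (w j) (yn' j)) = T (w i) y' * B := by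
      rw [hsplit T yn' w, herase w, hyni]
    have e4 : (∏ j, T (w j) (yn j)) = T (w i) (yn i) * B := hsplit T yn w
    rw [e1, e2, e3, e4]
    have h1 := hhalf (xn i) (w i) (yn i)
    have h2 := hhalf (w i) (xn i) y'
    have hmul : T (xn i) (yn i) * T (w i) y'
        ≤ Real.exp cT * (T (xn i) y' * T (w i) (yn i)) := by
      have := mul_le_mul h1 h2 (hTpos (w i) y').le
        (mul_nonneg (Real.exp_pos _).le (hTpos _ _).le)
      calc T (xn i) (yn i) * T (w i) y'
          ≤ Real.exp (cT / 2) * T (w i) (yn i) * (Real.exp (cT / 2) * T (xn i) y') := this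
        _ = Real.exp (cT / 2) * Real.exp (cT / 2) * (T (xn i) y' * T (w i) (yn i)) := by ring
        _ = Real.exp cT * (T (xn i) y' * T (w i) (yn i)) := by
            rw [← Real.exp_add]; ring_nf
    calc T (xn i) (yn i) * A * (T (w i) y' * B)
        = T (xn i) (yn i) * T (w i) y' * (A * B) := by ring
      _ ≤ Real.exp cT * (T (xn i) y' * T (w i) (yn i)) * (A * B) :=
          mul_le_mul_of_nonneg_right hmul (mul_nonneg hA hB)
      _ = Real.exp cT * (T (xn i) y' * A * (T (w i) (yn i) * B)) := by ring
  -- sum the termwise inequality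
  have hmain : Pc yn * PYf yn' ≤ Real.exp cT * (Pc yn' * PYf yn) := by
    rw [hPY_def]; simp only []
    rw [Finset.mul_sum, Finset.mul_sum, Finset.mul_sum]
    apply Finset.sum_le_sum
    intro w _
    have := mul_le_mul_of_nonneg_left (hterm w) (hp w)
    calc Pc yn * (p w * ∏ j, T (w j) (yn' j))
        = p w * (Pc yn * ∏ j, T (w j) (yn' j)) := by ring
      _ ≤ p w * (Real.exp cT * (Pc yn' * ∏ j, T (w j) (yn j))) := this
      _ = Real.exp cT * (Pc yn' * (p w * ∏ j, T (w j) (yn j))) := by ring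
  -- conclude via logs
  have hdiv : Pc yn / PYf yn ≤ Real.exp cT * Pc yn' / PYf yn' := by
    rw [div_le_div_iff₀ (hPYpos yn) (hPYpos yn')]
    nlinarith [hmain]
  have hlog := Real.log_le_log (div_pos (hPcpos yn) (hPYpos yn)) hdiv
  rw [mul_div_assoc, Real.log_mul (Real.exp_pos cT).ne'
    (div_pos (hPcpos yn') (hPYpos yn')).ne', Real.log_exp] at hlog
  linarith

/-- **Concentration of the information density for a DMC** (via McDiarmid's inequality):
consider a discrete memoryless channel with finite input alphabet `𝒳`, finite output alphabet
`𝒴`, and strictly positive transition probabilities `T x y = T(y|x)`.  Fix an input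
distribution `p` on `𝒳ⁿ` and let `PY` be the induced output distribution.  Then for every
fixed input block `xn ∈ 𝒳ⁿ` and every `t > 0`, the probability, under
`P_{Yⁿ|Xⁿ = xn}(yⁿ) = ∏ i, T (xn i) (yⁿ i)`, of the event
`log (P_{Yⁿ|Xⁿ=xn}(Yⁿ) / PY(Yⁿ)) ≥ D(P_{Yⁿ|Xⁿ=xn} ‖ PY) + t`
is at most `exp (-2 t² / (n c(T)²))`, where
`c(T) = 2 max_{x,x',y} log (T(y|x)/T(y|x'))`. -/
theorem dmc_information_density_concentration
    {𝒳 𝒴 : Type*} [Fintype 𝒳] [Fintype 𝒴] [Nonempty 𝒳] [Nonempty 𝒴]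
    (T : 𝒳 → 𝒴 → ℝ) (hTpos : ∀ x y, 0 < T x y) (hTsum : ∀ x, ∑ y : 𝒴, T x y = 1)
    {n : ℕ} (hn : 0 < n)
    (p : (Fin n → 𝒳) → ℝ) (hp : ∀ xn, 0 ≤ p xn) (hpsum : ∑ xn : Fin n → 𝒳, p xn = 1)
    (PY : (Fin n → 𝒴) → ℝ)
    (hPY : PY = fun yn => ∑ xn : Fin n → 𝒳, p xn * ∏ i, T (xn i) (yn i))
    (xn : Fin n → 𝒳)
    (Pcond : (Fin n → 𝒴) → ℝ) (hPcond : Pcond = fun yn => ∏ i, T (xn i) (yn i))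
    (D : ℝ) (hD : D = ∑ yn : Fin n → 𝒴, Pcond yn * Real.log (Pcond yn / PY yn))
    (cT : ℝ)
    (hcT : cT = (Finset.univ : Finset (𝒳 × 𝒳 × 𝒴)).sup'
      (Finset.univ_nonempty) (fun z => 2 * Real.log (T z.1 z.2.2 / T z.2.1 z.2.2)))
    (t : ℝ) (ht : 0 < t) :
    ∑ yn ∈ Finset.univ.filter
        (fun yn : Fin n → 𝒴 => D + t ≤ Real.log (Pcond yn / PY yn)), Pcond yn
      ≤ Real.exp (-2 * t ^ 2 / (n * cT ^ 2)) := by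
  subst hPcond hPY hD
  -- nonnegativity of cT
  have hcT0 : 0 ≤ cT := by
    have h := Finset.le_sup' (fun z : 𝒳 × 𝒳 × 𝒴 =>
        2 * Real.log (T z.1 z.2.2 / T z.2.1 z.2.2))
      (Finset.mem_univ (Classical.arbitrary 𝒳, Classical.arbitrary 𝒳,
        Classical.arbitrary 𝒴))
    rw [← hcT] at h
    rw [div_self (hTpos _ _).ne', Real.log_one, mul_zero] at h
    exact h
  rcases eq_or_lt_of_le hcT0 with hcTz | hcTpos
  · -- degenerate case cT = 0 : RHS is exp 0 = 1, LHS ≤ total mass = 1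
    rw [← hcTz]
    have hQ1 : ∑ yn : Fin n → 𝒴, ∏ i, T (xn i) (yn i) = 1 := by
      rw [← Fintype.prod_sum (fun (i : Fin n) (y : 𝒴) => T (xn i) y)]
      rw [Finset.prod_congr rfl fun i _ => hTsum (xn i)]
      simp
    have hle : ∑ yn ∈ Finset.univ.filter
          (fun yn : Fin n → 𝒴 =>
            (∑ zn : Fin n → 𝒴, (∏ i, T (xn i) (zn i)) *
              Real.log ((∏ i, T (xn i) (zn i)) /
                ∑ xn' : Fin n → 𝒳, p xn' * ∏ i, T (xn' i) (zn i))) + t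
              ≤ Real.log ((∏ i, T (xn i) (yn i)) /
                ∑ xn' : Fin n → 𝒳, p xn' * ∏ i, T (xn' i) (yn i))),
          ∏ i, T (xn i) (yn i)
        ≤ ∑ yn : Fin n → 𝒴, ∏ i, T (xn i) (yn i) := by
      apply Finset.sum_le_sum_of_subset_of_nonneg (Finset.filter_subset _ _)
      intro yn _ _
      exact Finset.prod_nonneg fun i _ => (hTpos _ _).le
    refine le_trans hle ?_
    rw [hQ1]
    norm_num
  · -- main case cT > 0
    have hhalf : ∀ x x' y, T x y ≤ Real.exp (cT / 2) * T x' y := by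
      intro x x' y
      have h := Finset.le_sup' (fun z : 𝒳 × 𝒳 × 𝒴 =>
          2 * Real.log (T z.1 z.2.2 / T z.2.1 z.2.2)) (Finset.mem_univ (x, x', y))
      rw [← hcT] at h
      simp only at h
      have hlog : Real.log (T x y / T x' y) ≤ cT / 2 := by linarith
      have hd : T x y / T x' y ≤ Real.exp (cT / 2) := by
        rw [← Real.exp_log (div_pos (hTpos x y) (hTpos x' y))]
        exact Real.exp_le_exp.mpr hlog
      rwa [div_le_iff₀ (hTpos x' y)] at hd
    exact mcdiarmid_fin n hn (fun i => T (xn i))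
      (fun i y => (hTpos (xn i) y).le) (fun i => hTsum (xn i))
      (fun yn => Real.log ((∏ i, T (xn i) (yn i)) /
        ∑ xn' : Fin n → 𝒳, p xn' * ∏ i, T (xn' i) (yn i)))
      cT hcTpos
      (fun i yn y' => info_density_bdd_diff T hTpos p hp hpsum xn cT hhalf i yn y')
      t ht
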